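/- Let G be a finite simple graph and e an edge of G. For every edge e' of G with e' ≠ e, deleting e decreases the truss number of e' by at most 1: φ_{G−e}(e') ≥ φ_G(e') − 1. -/

import Mathlib

open SimpleGraph

variable {V : Type*}

/-- `H` is a `k`-truss of `G`: a connected subgraph with at least one edge in which
every edge lies in at least `k - 2` triangles of `H` (i.e. the endpoints of every edge
have at least `k - 2` common neighbors in `H`). -/
def IsTruss (G : SimpleGraph V) (k : ℕ) (H : G.Subgraph) : Prop :=
  H.Connected ∧ H.edgeSet.Nonempty ∧
    ∀ a b : V, H.Adj a b → k - 2 ≤ {c : V | H.Adj a c ∧ H.Adj b c}.ncard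

/-- The truss number `φ_G(e)` of an edge `e`: the largest `k` such that `e` lies in some
`k`-truss of `G`. -/
noncomputable def trussNumber (G : SimpleGraph V) (e : Sym2 V) : ℕ :=
  sSup {k : ℕ | ∃ H : G.Subgraph, IsTruss G k H ∧ e ∈ H.edgeSet}

/-- The support of the edge `(a, b)` in a subgraph `H`: the number of triangles of `H`
containing it, i.e. the number of common neighbors of `a` and `b` in `H`. -/
noncomputable def suppIn {G : SimpleGraph V} (H : G.Subgraph) (a b : V) : ℕ :=
  {c : V | H.Adj a c ∧ H.Adj b c}.ncard

/-- The support of the edge `(a, b)` in `G`. -/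
noncomputable def suppG (G : SimpleGraph V) (a b : V) : ℕ :=
  {c : V | G.Adj a c ∧ G.Adj b c}.ncard

/-- `S_{a,b}`: the common neighbors of `a` and `b` in `G`. -/
def commonNbrs (G : SimpleGraph V) (a b : V) : Set V :=
  {c : V | G.Adj a c ∧ G.Adj b c}

/-- `E_{S_{a,b} ↔ {a,b}}`: the edges of `G` joining a common neighbor of `a` and `b`
to `a` or to `b`. -/
def sideEdges (G : SimpleGraph V) (a b : V) : Set (Sym2 V) :=
  {e | ∃ c, G.Adj a c ∧ G.Adj b c ∧ (e = s(a, c) ∨ e = s(b, c))}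

/-- `k_min((a,b))`: minimum truss number among the edges of `E_{S_{a,b} ↔ {a,b}}`. -/
noncomputable def kmin (G : SimpleGraph V) (a b : V) : ℕ :=
  sInf (trussNumber G '' sideEdges G a b)

/-- `k_max((a,b))`: maximum truss number among the edges of `E_{S_{a,b} ↔ {a,b}}`. -/
noncomputable def kmax (G : SimpleGraph V) (a b : V) : ℕ :=
  sSup (trussNumber G '' sideEdges G a b)

/-- `G + (a,b)`: the graph obtained from `G` by inserting the edge `(a, b)`. -/
def insertEdge (G : SimpleGraph V) (a b : V) : SimpleGraph V :=
  G ⊔ fromEdgeSet {s(a, b)}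

lemma mem_two (G : SimpleGraph V) {a b : V} (h : G.Adj a b) :
    2 ∈ {k : ℕ | ∃ H : G.Subgraph, IsTruss G k H ∧ s(a,b) ∈ H.edgeSet} := by
  refine ⟨G.subgraphOfAdj h, ⟨Subgraph.subgraphOfAdj_connected h, ⟨s(a,b), by simp⟩, ?_⟩, by simp⟩
  intro x y _
  simp

lemma truss_bdd [Fintype V] (G : SimpleGraph V) (e : Sym2 V) :
    BddAbove {k : ℕ | ∃ H : G.Subgraph, IsTruss G k H ∧ e ∈ H.edgeSet} := by
  refine ⟨Fintype.card V + 2, ?_⟩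
  rintro k ⟨H, ⟨_, _, htri⟩, hm⟩
  induction e using Sym2.ind with
  | _ a b =>
    have hadj : H.Adj a b := hm
    have h1 := htri a b hadj
    have h2 : ({c : V | H.Adj a c ∧ H.Adj b c}).ncard ≤ Fintype.card V := by
      have := Set.ncard_le_ncard (Set.subset_univ {c : V | H.Adj a c ∧ H.Adj b c})
        Set.finite_univ
      simpa [Set.ncard_univ] using this
    omega

theorem stmt3 [Fintype V] (G : SimpleGraph V) (e e' : Sym2 V)
    (he : e ∈ G.edgeSet) (he' : e' ∈ G.edgeSet) (hne : e' ≠ e) :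
    trussNumber G e' - 1 ≤ trussNumber (G.deleteEdges {e}) e' := by
  induction e' using Sym2.ind with
  | _ a b =>
  have hab : G.Adj a b := he'
  have hab' : (G.deleteEdges {e}).Adj a b := by
    rw [deleteEdges_adj]
    exact ⟨hab, by simpa using hne⟩
  set S := {k : ℕ | ∃ H : G.Subgraph, IsTruss G k H ∧ s(a,b) ∈ H.edgeSet} with hS
  set S' := {k : ℕ | ∃ H : (G.deleteEdges {e}).Subgraph,
      IsTruss (G.deleteEdges {e}) k H ∧ s(a,b) ∈ H.edgeSet} with hS'
  have hbdd : BddAbove S := truss_bdd G s(a,b)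
  have hbdd' : BddAbove S' := truss_bdd (G.deleteEdges {e}) s(a,b)
  have h2' : 2 ≤ trussNumber (G.deleteEdges {e}) s(a,b) :=
    le_csSup hbdd' (mem_two _ hab')
  set k := trussNumber G s(a,b) with hk
  by_cases hk3 : k ≤ 3
  · omega
  -- now k ≥ 4
  have hkmem : k ∈ S := Nat.sSup_mem ⟨2, mem_two G hab⟩ hbdd
  obtain ⟨H, ⟨hconn, -, htri⟩, hmem⟩ := hkmem
  have hmemadj : H.Adj a b := hmem
  -- the subgraph H with edge e removed
  let H' : (G.deleteEdges {e}).Subgraph :=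
  { verts := H.verts
    Adj := fun u v => H.Adj u v ∧ s(u,v) ≠ e
    adj_sub := fun h => by
      rw [deleteEdges_adj]
      exact ⟨H.adj_sub h.1, by simpa using h.2⟩
    edge_vert := fun h => H.edge_vert h.1
    symm := ⟨fun u v h => ⟨h.1.symm, by rw [Sym2.eq_swap]; exact h.2⟩⟩ }
  have hH'adj : ∀ u v : V, H'.Adj u v ↔ H.Adj u v ∧ s(u,v) ≠ e := fun _ _ => Iff.rfl
  -- triangle counting
  have htri' : ∀ u v : V, H'.Adj u v → k - 1 - 2 ≤ {c : V | H'.Adj u c ∧ H'.Adj v c}.ncard := by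
    intro u v huv
    set A := {c : V | H.Adj u c ∧ H.Adj v c} with hA
    set B := {c : V | H'.Adj u c ∧ H'.Adj v c} with hB
    have hBA : B ⊆ A := fun c hc => ⟨hc.1.1, hc.2.1⟩
    have hsub : ∀ c₁ ∈ A \ B, ∀ c₂ ∈ A \ B, c₁ = c₂ := by
      rintro c₁ ⟨hc₁, hc₁'⟩ c₂ ⟨hc₂, hc₂'⟩
      have key : ∀ c, c ∈ A → c ∉ B → s(u,c) = e ∨ s(v,c) = e := by
        intro c hcA hcB
        by_contra hcon
        push_neg at hcon
        exact hcB ⟨⟨hcA.1, hcon.1⟩, ⟨hcA.2, hcon.2⟩⟩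
      have h1 := key c₁ hc₁ hc₁'
      have h2 := key c₂ hc₂ hc₂'
      have hne2 : s(u,v) ≠ e := huv.2
      rcases h1 with h1 | h1 <;> rcases h2 with h2 | h2
      · exact Sym2.congr_right.mp (h1.trans h2.symm)
      · -- s(u,c₁) = s(v,c₂)
        have : s(u,c₁) = s(v,c₂) := h1.trans h2.symm
        rw [Sym2.eq_iff] at this
        rcases this with ⟨rfl, rfl⟩ | ⟨rfl, rfl⟩
        · rfl
        · exact absurd (by rw [← h2, Sym2.eq_swap]) hne2
      · have : s(v,c₁) = s(u,c₂) := h1.trans h2.symm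
        rw [Sym2.eq_iff] at this
        rcases this with ⟨rfl, rfl⟩ | ⟨rfl, rfl⟩
        · rfl
        · exact absurd (by rw [← h2]) hne2
      · exact Sym2.congr_right.mp (h1.trans h2.symm)
    have hfin : A.Finite := Set.toFinite A
    have hcard : (A \ B).ncard ≤ 1 := by
      rcases Set.eq_empty_or_nonempty (A \ B) with h | ⟨c, hc⟩
      · simp [h]
      · have : A \ B ⊆ {c} := fun x hx => hsub x hx c hc
        calc (A \ B).ncard ≤ ({c} : Set V).ncard := Set.ncard_le_ncard this (Set.finite_singleton c)
          _ = 1 := Set.ncard_singleton c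
    have hAcard : A.ncard ≤ B.ncard + (A \ B).ncard := by
      calc A.ncard = (B ∪ (A \ B)).ncard := by rw [Set.union_diff_cancel hBA]
        _ ≤ B.ncard + (A \ B).ncard := Set.ncard_union_le _ _
    have hAk : k - 2 ≤ A.ncard := htri u v huv.1
    omega
  -- connectivity
  have hstep : ∀ (u x : V) (hu : u ∈ H.verts) (hx : x ∈ H.verts), H.Adj u x →
      H'.coe.Reachable ⟨u, hu⟩ ⟨x, hx⟩ := by
    intro u x hu hx hadj
    by_cases hce : s(u,x) = e
    · have hA : (1 : ℕ) ≤ {c : V | H.Adj u c ∧ H.Adj x c}.ncard := by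
        have := htri u x hadj
        omega
      have : {c : V | H.Adj u c ∧ H.Adj x c}.Nonempty := by
        rw [← Set.ncard_pos (Set.toFinite _)]
        omega
      obtain ⟨c, hc1, hc2⟩ := this
      have huc : s(u,c) ≠ e := by
        intro h
        rw [← hce, Sym2.congr_right] at h
        exact (H.adj_sub hc2).ne' h
      have hxc : s(x,c) ≠ e := by
        intro h
        rw [← hce, Sym2.eq_iff] at h
        rcases h with ⟨h1, h2⟩ | ⟨h1, h2⟩
        · exact (H.adj_sub hadj).ne h1.symm
        · exact (H.adj_sub hc1).ne h2.symm
      have hcv : c ∈ H.verts := H.edge_vert hc1.symm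
      have r1 : H'.coe.Adj ⟨u, hu⟩ ⟨c, hcv⟩ := ⟨hc1, huc⟩
      have r2 : H'.coe.Adj ⟨c, hcv⟩ ⟨x, hx⟩ := ⟨hc2.symm, by rwa [Sym2.eq_swap]⟩
      exact r1.reachable.trans r2.reachable
    · exact SimpleGraph.Adj.reachable (⟨hadj, hce⟩ : H'.coe.Adj ⟨u, hu⟩ ⟨x, hx⟩)
  have walkrec : ∀ (p q : H.verts) (w : H.coe.Walk p q),
      H'.coe.Reachable ⟨p.1, p.2⟩ ⟨q.1, q.2⟩ := by
    intro p q w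
    induction w with
    | nil => exact Reachable.refl _
    | @cons p r q h w ih =>
      exact (hstep p.1 r.1 p.2 r.2 h).trans ih
  have hconn' : H'.Connected := by
    rw [Subgraph.connected_iff]
    constructor
    · rw [Subgraph.preconnected_iff]
      rintro ⟨u, hu⟩ ⟨v, hv⟩
      obtain ⟨w⟩ : H.coe.Reachable ⟨u, hu⟩ ⟨v, hv⟩ := hconn ⟨u, hu⟩ ⟨v, hv⟩
      exact walkrec ⟨u, hu⟩ ⟨v, hv⟩ w
    · exact hconn.nonempty
  have hmem' : s(a,b) ∈ H'.edgeSet := by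
    have : H'.Adj a b := ⟨hmemadj, hne⟩
    exact this
  have : k - 1 ∈ S' := ⟨H', ⟨hconn', ⟨s(a,b), hmem'⟩, htri'⟩, hmem'⟩
  exact le_csSup hbdd' this
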